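/- Let I, J ⊆ [0,∞) be sets satisfying the descending chain condition and let c > 0 be a real number. Then the set 𝒟_c(I;J) satisfies the descending chain condition. -/

import Mathlib

open Filter

/-- A set of reals satisfies the descending chain condition (DCC) if it contains
no infinite strictly decreasing sequence. -/
def DCC (S : Set ℝ) : Prop := ¬ ∃ f : ℕ → ℝ, StrictAnti f ∧ ∀ n, f n ∈ S

/-- A set of reals satisfies the ascending chain condition (ACC) if it contains
no infinite strictly increasing sequence. -/
def ACC (S : Set ℝ) : Prop := ¬ ∃ f : ℕ → ℝ, StrictMono f ∧ ∀ n, f n ∈ S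

/-- `x` is an accumulation point of `S` if every neighborhood of `x` contains a
point of `S` different from `x`. -/
def IsAccPt (x : ℝ) (S : Set ℝ) : Prop := ∀ ε > 0, ∃ y ∈ S, y ≠ x ∧ |y - x| < ε

/-- The set `∂S` of accumulation points of `S` in `ℝ`. -/
def accPts (S : Set ℝ) : Set ℝ := {x | IsAccPt x S}

/-- The set of all (nonempty) finite sums of elements of `I`. -/
def finSums (I : Set ℝ) : Set ℝ :=
  {x | ∃ l : ℕ, 0 < l ∧ ∃ g : Fin l → ℝ, (∀ p, g p ∈ I) ∧ x = ∑ p, g p}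

/-- `I₊ = {0} ∪ { x ∈ [0,1] : x is a nonempty finite sum of elements of I }`. -/
def plusSet (I : Set ℝ) : Set ℝ := {0} ∪ (Set.Icc 0 1 ∩ finSums I)

/-- `D(I) = { a ≤ 1 : a = (m - 1 + f)/m, m ∈ ℕ⁺, f ∈ I₊ }`. -/
def DSet (I : Set ℝ) : Set ℝ :=
  {a | a ≤ 1 ∧ ∃ m : ℕ, 0 < m ∧ ∃ f ∈ plusSet I, a = ((m : ℝ) - 1 + f) / m}

/-- `𝒟_c(I;J) = { a ≤ 1 : a = (m - 1 + f + kc)/m, m ∈ ℕ⁺, f ∈ I₊,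
k a nonzero finite sum of elements of J }`. -/
def DcSet (I J : Set ℝ) (c : ℝ) : Set ℝ :=
  {a | a ≤ 1 ∧ ∃ m : ℕ, 0 < m ∧ ∃ f ∈ plusSet I, ∃ k ∈ finSums J, k ≠ 0 ∧
    a = ((m : ℝ) - 1 + f + k * c) / m}

/-- The closure `S̄ = S ∪ ∂S` of `S` in `ℝ`. -/
def clSet (S : Set ℝ) : Set ℝ := S ∪ accPts S

lemma dcc_iff_isWF (S : Set ℝ) : DCC S ↔ S.IsWF := by
  rw [Set.isWF_iff_no_descending_seq]
  constructor
  · intro h f hf hmem; exact h ⟨f, hf, hmem⟩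
  · rintro h ⟨f, hf, hmem⟩; exact h f hf hmem

lemma finSums_subset_closure (J : Set ℝ) :
    finSums J ⊆ (AddSubmonoid.closure J : Set ℝ) := by
  rintro x ⟨l, hl, g, hg, rfl⟩
  exact AddSubmonoid.sum_mem _ fun p _ => AddSubmonoid.subset_closure (hg p)

lemma isWF_finSums {J : Set ℝ} (hJ0 : J ⊆ Set.Ici 0) (hJ : DCC J) :
    (finSums J).IsWF := by
  have h1 : J.IsPWO := ((dcc_iff_isWF J).mp hJ).isPWO
  have h2 := h1.addSubmonoid_closure (fun x hx => hJ0 hx)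
  exact h2.isWF.mono (finSums_subset_closure J)

lemma isWF_plusSet {I : Set ℝ} (hI0 : I ⊆ Set.Ici 0) (hI : DCC I) :
    (plusSet I).IsWF := by
  have : plusSet I ⊆ insert (0:ℝ) (finSums I) := by
    rintro x (rfl | ⟨_, hx⟩); · exact Set.mem_insert _ _
    · exact Set.mem_insert_of_mem _ hx
  exact (((isWF_finSums hI0 hI)).insert 0).mono this

lemma finSums_nonneg {J : Set ℝ} (hJ0 : J ⊆ Set.Ici 0) {x : ℝ}
    (hx : x ∈ finSums J) : 0 ≤ x := by
  obtain ⟨l, hl, g, hg, rfl⟩ := hx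
  exact Finset.sum_nonneg fun p _ => hJ0 (hg p)

lemma plusSet_nonneg {I : Set ℝ} (hI0 : I ⊆ Set.Ici 0) {x : ℝ}
    (hx : x ∈ plusSet I) : 0 ≤ x := by
  rcases hx with rfl | ⟨⟨h, _⟩, _⟩ <;> [rfl; exact h]

lemma isWF_scaled {S : Set ℝ} (hS : S.IsWF) {c : ℝ} (hc : 0 < c) :
    ((fun k => k * c) '' S).IsWF := by
  rw [Set.isWF_iff_no_descending_seq] at hS ⊢
  intro f hf hmem
  choose g hg hgc using hmem
  refine hS g (fun a b hab => ?_) hg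
  have ha : g a * c = f a := hgc a
  have hb : g b * c = f b := hgc b
  have h := hf hab
  rw [← ha, ← hb] at h
  exact (mul_lt_mul_iff_of_pos_right hc).mp h

open Pointwise in
theorem dcc_DcSet' (I J : Set ℝ) (hI0 : I ⊆ Set.Ici 0) (hJ0 : J ⊆ Set.Ici 0)
    (hI : DCC I) (hJ : DCC J) (c : ℝ) (hc : 0 < c) :
    DCC ({a | a ≤ 1 ∧ ∃ m : ℕ, 0 < m ∧ ∃ f ∈ plusSet I, ∃ k ∈ finSums J, k ≠ 0 ∧
      a = ((m : ℝ) - 1 + f + k * c) / m}) := by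
  set T : Set ℝ := plusSet I + (fun k => k * c) '' finSums J with hT
  have hTwf : T.IsWF :=
    (isWF_plusSet hI0 hI).add (isWF_scaled (isWF_finSums hJ0 hJ) hc)
  rintro ⟨a, ha, hmem⟩
  have key : ∀ n, ∃ m : ℕ, 0 < m ∧ ∃ t ∈ T, 0 < t ∧
      1 - a n = (1 - t) / m := by
    intro n
    obtain ⟨hle, m, hm, f, hf, k, hk, hk0, heq⟩ := hmem n
    have hmr : (0:ℝ) < m := Nat.cast_pos.mpr hm
    have hkpos : 0 < k := lt_of_le_of_ne (finSums_nonneg hJ0 hk) (Ne.symm hk0)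
    have htpos : 0 < f + k * c :=
      add_pos_of_nonneg_of_pos (plusSet_nonneg hI0 hf) (mul_pos hkpos hc)
    refine ⟨m, hm, f + k * c, ?_, htpos, ?_⟩
    · exact Set.add_mem_add hf ⟨k, hk, rfl⟩
    · rw [heq]; field_simp; ring
  choose m hm t htT ht0 heq using key
  have hb : StrictMono (fun n => 1 - a n) := fun x y hxy => by
    have := ha hxy; simp only; linarith
  have hb1 : (0:ℝ) < 1 - a 1 := by
    have h0 : a 1 < a 0 := ha zero_lt_one
    have := (hmem 0).1
    linarith
  set B : ℕ := ⌈1 / (1 - a 1)⌉₊ with hB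
  have hbound : ∀ n, 1 ≤ n → m n < B + 1 := by
    intro n hn
    have hbn : 1 - a 1 ≤ 1 - a n := by
      rcases eq_or_lt_of_le hn with h | h
      · rw [← h]
      · exact (hb h).le
    have hmr : (0:ℝ) < m n := Nat.cast_pos.mpr (hm n)
    have h1 : (m n : ℝ) * (1 - a n) = 1 - t n := by
      rw [heq n]; field_simp
    have h2 : (m n : ℝ) * (1 - a 1) < 1 := by
      have := ht0 n
      nlinarith
    have h3 : (m n : ℝ) < 1 / (1 - a 1) := by
      rw [lt_div_iff₀ hb1]; exact h2
    have hB1 : 1 / (1 - a 1) ≤ (B : ℝ) := Nat.le_ceil _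
    have h4 : (m n : ℝ) < (B : ℝ) + 1 := by linarith
    exact_mod_cast h4
  -- pigeonhole
  have hFin : ∀ n : ℕ, m (n + 1) < B + 1 := fun n => hbound (n + 1) (Nat.le_add_left 1 n)
  set F : ℕ → Fin (B + 1) := fun n => ⟨m (n + 1), hFin n⟩ with hF
  obtain ⟨y, hy⟩ := Finite.exists_infinite_fiber F
  have hyinf : (F ⁻¹' {y}).Infinite := Set.infinite_coe_iff.mp hy
  obtain ⟨g, hg, hgy⟩ := Nat.exists_strictMono_subsequence
    (fun N => by obtain ⟨b, hb', hb''⟩ := hyinf.exists_gt N; exact ⟨b, hb'', hb'⟩)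
  have hmg : ∀ n, m (g n + 1) = (y : ℕ) := fun n => by
    have := hgy n; simp only [Set.mem_preimage, Set.mem_singleton_iff, hF] at this
    exact congrArg Fin.val this
  have hy0 : 0 < (y : ℕ) := (hmg 0) ▸ hm (g 0 + 1)
  have hyr : (0:ℝ) < ((y : ℕ) : ℝ) := Nat.cast_pos.mpr hy0
  -- descending sequence in T
  have : ∃ s : ℕ → ℝ, StrictAnti s ∧ ∀ n, s n ∈ T := by
    refine ⟨fun n => t (g n + 1), fun x z hxz => ?_, fun n => htT _⟩
    have hgx : g x + 1 < g z + 1 := by simpa using hg hxz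
    have h1 : 1 - a (g x + 1) < 1 - a (g z + 1) := hb hgx
    have e1 : 1 - a (g x + 1) = (1 - t (g x + 1)) / (y : ℕ) := by
      rw [heq, hmg]
    have e2 : 1 - a (g z + 1) = (1 - t (g z + 1)) / (y : ℕ) := by
      rw [heq, hmg]
    rw [e1, e2, div_lt_div_iff₀ hyr hyr] at h1
    nlinarith
  obtain ⟨s, hs, hsT⟩ := this
  exact (Set.isWF_iff_no_descending_seq.mp hTwf) s hs hsT

/-- If `I, J ⊆ [0,∞)` satisfy the DCC and `c > 0`, then `𝒟_c(I;J)` satisfies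
the DCC. -/
theorem dcc_DcSet (I J : Set ℝ) (hI0 : I ⊆ Set.Ici 0) (hJ0 : J ⊆ Set.Ici 0)
    (hI : DCC I) (hJ : DCC J) (c : ℝ) (hc : 0 < c) :
    DCC (DcSet I J c) :=
  dcc_DcSet' I J hI0 hJ0 hI hJ c hc
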